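/- arXiv:1404.3552 — 2 statements merged into one kernel-verified Lean document; each statement's English description precedes it below -/
import Mathlib

section
/- For a C² curve τ: ℝ → ℂ with τ'(s) ≠ 0, the limit as σ → s of Im(τ'(σ)/(τ(σ) - τ(s))) equals Im(τ''(s)/(2τ'(s))). -/
open Complex Filter

private lemma slope_tendsto_aux (f : ℝ → ℂ) (x : ℝ) (f' : ℂ) (h : HasDerivAt f f' x) :
    Tendsto (fun y : ℝ => ((y:ℂ) - (x:ℂ))⁻¹ * (f y - f x)) (nhdsWithin x {x}ᶜ) (nhds f') := by
  simpa [slope_fun_def, Complex.real_smul] using hasDerivAt_iff_tendsto_slope.mp h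

private lemma taylor2_aux (τ : ℝ → ℂ) (s : ℝ) (hd : Differentiable ℝ τ)
    (hd2 : HasDerivAt (deriv τ) (deriv (deriv τ) s) s) :
    Tendsto (fun σ : ℝ => (τ σ - τ s - deriv τ s * ((σ:ℂ) - (s:ℂ))) / ((σ:ℂ) - (s:ℂ))^2)
      (nhdsWithin s {s}ᶜ) (nhds (deriv (deriv τ) s / 2)) := by
  set F : ℝ → ℂ := fun x => τ x - τ s - deriv τ s * ((x:ℂ) - (s:ℂ)) with hFdef
  have hF : ∀ x : ℝ, HasDerivAt F (deriv τ x - deriv τ s) x := by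
    intro x
    have h1 : HasDerivAt (fun y : ℝ => ((y:ℂ) - (s:ℂ))) 1 x := by
      simpa using (Complex.ofRealCLM.hasDerivAt (x := x)).sub_const (s:ℂ)
    have h2 := ((hd x).hasDerivAt.sub_const (τ s)).sub (h1.const_mul (deriv τ s))
    simp only [mul_one] at h2
    exact h2
  have hg : ∀ x : ℝ, HasDerivAt (fun y : ℝ => (y - s)^2) (2*(x - s)) x := by
    intro x
    have := ((hasDerivAt_id x).sub_const s).pow 2
    have h' : HasDerivAt ((fun y : ℝ => y - s)^2) (2*(x - s)) x := by simpa [mul_comm] using this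
    exact h'
  have hFcont : Continuous F := by
    have : Continuous τ := hd.continuous
    fun_prop
  have hF0 : F s = 0 := by simp [hFdef]
  -- slope of deriv τ at s
  have hslope : Tendsto (fun x : ℝ => ((x:ℂ) - (s:ℂ))⁻¹ * (deriv τ x - deriv τ s))
      (nhdsWithin s {s}ᶜ) (nhds (deriv (deriv τ) s)) := slope_tendsto_aux _ s _ hd2
  have hne : ∀ᶠ x in nhdsWithin s {s}ᶜ, x ≠ s := by
    filter_upwards [self_mem_nhdsWithin] with x hx using hx
  -- real part limit
  have hre : Tendsto (fun x : ℝ => (F x).re / (x - s)^2) (nhdsWithin s {s}ᶜ)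
      (nhds ((deriv (deriv τ) s).re / 2)) := by
    apply HasDerivAt.lhopital_zero_nhdsNE (f' := fun x => (deriv τ x - deriv τ s).re)
      (g' := fun x => 2*(x - s))
    · exact Eventually.of_forall fun x =>
        Complex.reCLM.hasFDerivAt.comp_hasDerivAt x (hF x)
    · exact Eventually.of_forall hg
    · filter_upwards [hne] with x hx
      simpa [sub_eq_zero] using hx
    · have : Tendsto (fun x => (F x).re) (nhds s) (nhds ((F s).re)) :=
        (Complex.continuous_re.comp hFcont).tendsto s
      rw [hF0] at this
      simpa using this.mono_left nhdsWithin_le_nhds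
    · have : Tendsto (fun x : ℝ => (x - s)^2) (nhds s) (nhds ((s - s)^2)) :=
        ((continuous_id.sub continuous_const).pow 2).tendsto s
      simpa using this.mono_left nhdsWithin_le_nhds
    · have h1 : Tendsto (fun x : ℝ => (x - s)⁻¹ * (deriv τ x - deriv τ s).re)
          (nhdsWithin s {s}ᶜ) (nhds ((deriv (deriv τ) s).re)) := by
        have := (Complex.continuous_re.tendsto _).comp hslope
        refine this.congr fun x => ?_
        simp [← Complex.ofReal_sub, ← Complex.ofReal_inv, Complex.re_ofReal_mul]
      have h2 := h1.div_const 2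
      refine h2.congr fun x => ?_
      rw [div_eq_mul_inv, div_eq_mul_inv, mul_inv]
      ring
  -- imaginary part limit
  have him : Tendsto (fun x : ℝ => (F x).im / (x - s)^2) (nhdsWithin s {s}ᶜ)
      (nhds ((deriv (deriv τ) s).im / 2)) := by
    apply HasDerivAt.lhopital_zero_nhdsNE (f' := fun x => (deriv τ x - deriv τ s).im)
      (g' := fun x => 2*(x - s))
    · exact Eventually.of_forall fun x =>
        Complex.imCLM.hasFDerivAt.comp_hasDerivAt x (hF x)
    · exact Eventually.of_forall hg
    · filter_upwards [hne] with x hx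
      simpa [sub_eq_zero] using hx
    · have : Tendsto (fun x => (F x).im) (nhds s) (nhds ((F s).im)) :=
        (Complex.continuous_im.comp hFcont).tendsto s
      rw [hF0] at this
      simpa using this.mono_left nhdsWithin_le_nhds
    · have : Tendsto (fun x : ℝ => (x - s)^2) (nhds s) (nhds ((s - s)^2)) :=
        ((continuous_id.sub continuous_const).pow 2).tendsto s
      simpa using this.mono_left nhdsWithin_le_nhds
    · have h1 : Tendsto (fun x : ℝ => (x - s)⁻¹ * (deriv τ x - deriv τ s).im)
          (nhdsWithin s {s}ᶜ) (nhds ((deriv (deriv τ) s).im)) := by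
        have := (Complex.continuous_im.tendsto _).comp hslope
        refine this.congr fun x => ?_
        simp [← Complex.ofReal_sub, ← Complex.ofReal_inv, Complex.im_ofReal_mul]
      have h2 := h1.div_const 2
      refine h2.congr fun x => ?_
      rw [div_eq_mul_inv, div_eq_mul_inv, mul_inv]
      ring
  -- combine
  have hcomb := (((Complex.continuous_ofReal.tendsto _).comp hre).add
    (((Complex.continuous_ofReal.tendsto _).comp him).mul_const I))
  have hval : (((deriv (deriv τ) s).re / 2 : ℝ) : ℂ) + (((deriv (deriv τ) s).im / 2 : ℝ) : ℂ) * I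
      = deriv (deriv τ) s / 2 := by
    set z := deriv (deriv τ) s
    calc (((z.re / 2 : ℝ)) : ℂ) + ((z.im / 2 : ℝ) : ℂ) * I
        = ((z.re : ℂ) + (z.im : ℂ) * I) / 2 := by push_cast; ring
      _ = z / 2 := by rw [Complex.re_add_im]
  rw [hval] at hcomb
  refine hcomb.congr fun x => ?_
  have hsq : ((x:ℂ) - (s:ℂ))^2 = (((x - s)^2 : ℝ) : ℂ) := by push_cast; ring
  show (((F x).re / (x - s)^2 : ℝ) : ℂ) + (((F x).im / (x - s)^2 : ℝ) : ℂ) * I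
      = F x / ((x:ℂ) - (s:ℂ))^2
  rw [hsq]
  apply Complex.ext
  · simp only [Complex.add_re, Complex.mul_re, Complex.ofReal_re, Complex.ofReal_im,
      Complex.I_re, Complex.I_im, Complex.div_ofReal_re]
    ring
  · simp only [Complex.add_im, Complex.mul_im, Complex.ofReal_re, Complex.ofReal_im,
      Complex.I_re, Complex.I_im, Complex.div_ofReal_im]
    ring

/-- Diagonal limit of the kernel `M⁽¹⁾`: for a C² curve `τ` with `τ'(s) ≠ 0`,
injective near `s`, `Im(τ'(σ)/(τ(σ)-τ(s))) → Im(τ''(s)/(2τ'(s)))` as `σ → s`. -/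
theorem M1_diagonal_limit (τ : ℝ → ℂ) (s : ℝ)
    (hτ : ContDiff ℝ 2 τ) (hτ' : deriv τ s ≠ 0)
    (hinj : ∀ᶠ σ in nhdsWithin s {s}ᶜ, τ σ ≠ τ s) :
    Tendsto (fun σ : ℝ => (deriv τ σ / (τ σ - τ s)).im)
      (nhdsWithin s {s}ᶜ)
      (nhds ((deriv (deriv τ) s / (2 * deriv τ s)).im)) := by
  have hdiff : Differentiable ℝ τ := hτ.differentiable two_ne_zero
  have hC1 : ContDiff ℝ 1 (deriv τ) := by
    have h : ContDiff ℝ ((1 : ℕ) + 1) τ := by exact_mod_cast hτ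
    exact (contDiff_succ_iff_deriv.mp h).2.2
  have hd'diff : Differentiable ℝ (deriv τ) := hC1.differentiable one_ne_zero
  have hd2 : HasDerivAt (deriv τ) (deriv (deriv τ) s) s := (hd'diff s).hasDerivAt
  have hslope2 : Tendsto (fun σ : ℝ => ((σ:ℂ) - (s:ℂ))⁻¹ * (deriv τ σ - deriv τ s))
      (nhdsWithin s {s}ᶜ) (nhds (deriv (deriv τ) s)) := slope_tendsto_aux _ s _ hd2
  have hG := taylor2_aux τ s hdiff hd2
  have hnum := hslope2.sub hG
  have hden : Tendsto (fun σ : ℝ => ((σ:ℂ) - (s:ℂ))⁻¹ * (τ σ - τ s))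
      (nhdsWithin s {s}ᶜ) (nhds (deriv τ s)) := slope_tendsto_aux _ s _ (hdiff s).hasDerivAt
  have hq := hnum.div hden hτ'
  have hq' := (Complex.continuous_im.tendsto _).comp hq
  have hval : ((deriv (deriv τ) s - deriv (deriv τ) s / 2) / deriv τ s).im
      = (deriv (deriv τ) s / (2 * deriv τ s)).im := by
    congr 1
    field_simp
    ring
  rw [hval] at hq'
  refine hq'.congr' ?_
  filter_upwards [hinj, self_mem_nhdsWithin] with σ hτne hσ
  have hσs : σ ≠ s := hσ
  have hu : ((σ:ℂ) - (s:ℂ)) ≠ 0 := by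
    simpa [sub_eq_zero, Complex.ofReal_inj] using hσs
  have hv : τ σ - τ s ≠ 0 := sub_ne_zero.mpr hτne
  have key : (((σ:ℂ) - (s:ℂ))⁻¹ * (deriv τ σ - deriv τ s)
        - (τ σ - τ s - deriv τ s * ((σ:ℂ) - (s:ℂ))) / ((σ:ℂ) - (s:ℂ))^2)
        / (((σ:ℂ) - (s:ℂ))⁻¹ * (τ σ - τ s))
      = deriv τ σ / (τ σ - τ s) - ((σ:ℂ) - (s:ℂ))⁻¹ := by
    field_simp
    ring
  simp only [Function.comp_apply, Pi.div_apply]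
  rw [key]
  have : (((σ:ℂ) - (s:ℂ))⁻¹).im = 0 := by
    rw [← Complex.ofReal_sub, ← Complex.ofReal_inv]
    exact Complex.ofReal_im _
  simp [Complex.sub_im, this]
end

section
/- For a C² curve τ: ℝ → ℂ with τ'(s) ≠ 0, the limit as σ → s of Im(τ'(σ)·(conj(τ(σ)) − conj(τ(s)))) / (conj(τ(σ)) − conj(τ(s)))² equals Im(τ''(s)·conj(τ'(s))) / (2·conj(τ'(s))²). -/
open Complex Filter
open scoped Topology

private lemma M2_aux (x : ℝ) (c w : ℂ) (hc : c ≠ 0) :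
    ((x : ℂ) / c ^ 2) / (w / c) ^ 2 = (x : ℂ) / w ^ 2 := by
  by_cases hw : w = 0
  · simp [hw]
  · field_simp

/-- Diagonal limit of the kernel `M⁽²⁾`: for a C² curve `τ` with `τ'(s) ≠ 0`,
injective near `s`,
`Im(τ'(σ)(conj τ(σ) − conj τ(s)))/(conj τ(σ) − conj τ(s))² →
  Im(τ''(s) conj τ'(s))/(2 (conj τ'(s))²)` as `σ → s`. -/
theorem M2_diagonal_limit (τ : ℝ → ℂ) (s : ℝ)
    (hτ : ContDiff ℝ 2 τ) (hτ' : deriv τ s ≠ 0)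
    (hinj : ∀ᶠ σ in nhdsWithin s {s}ᶜ, τ σ ≠ τ s) :
    Tendsto
      (fun σ : ℝ =>
        (((deriv τ σ * ((starRingEnd ℂ) (τ σ) - (starRingEnd ℂ) (τ s))).im : ℂ) /
          ((starRingEnd ℂ) (τ σ) - (starRingEnd ℂ) (τ s)) ^ 2))
      (nhdsWithin s {s}ᶜ)
      (nhds
        (((deriv (deriv τ) s * (starRingEnd ℂ) (deriv τ s)).im : ℂ) /
          (2 * ((starRingEnd ℂ) (deriv τ s)) ^ 2))) := by
  have h2 : ContDiff ℝ ((1 : WithTop ℕ∞) + 1) τ := by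
    convert hτ using 2 <;> norm_num
  obtain ⟨hd1, -, hc1⟩ := contDiff_succ_iff_deriv.mp h2
  obtain ⟨hd2, hc2⟩ := contDiff_one_iff_deriv.mp hc1
  set a := deriv τ s with ha
  set b := deriv (deriv τ) s with hb
  set F : ℝ → ℂ := fun σ => (starRingEnd ℂ) (τ σ) - (starRingEnd ℂ) (τ s) with hFdef
  have hFs : F s = 0 := by simp [hFdef]
  have hF : ∀ σ, HasDerivAt F ((starRingEnd ℂ) (deriv τ σ)) σ := fun σ =>
    ((hd1 σ).hasDerivAt.star).sub_const _
  -- slope limit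
  have hslope : Tendsto (fun σ => F σ / ((σ - s : ℝ) : ℂ)) (𝓝[≠] s)
      (𝓝 ((starRingEnd ℂ) a)) := by
    have h := hasDerivAt_iff_tendsto_slope.mp (hF s)
    refine h.congr fun σ => ?_
    simp [slope, hFs, Complex.real_smul, div_eq_inv_mul]
  -- conj a ≠ 0
  have hca : (starRingEnd ℂ) a ≠ 0 := by
    simpa using hτ'
  -- numerator function
  set g : ℝ → ℝ := fun σ => (deriv τ σ * F σ).im with hgdef
  have hg : ∀ σ, HasDerivAt g ((deriv (deriv τ) σ * F σ).im) σ := by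
    intro σ
    have hmul : HasDerivAt (fun σ => deriv τ σ * F σ)
        (deriv (deriv τ) σ * F σ + deriv τ σ * (starRingEnd ℂ) (deriv τ σ)) σ :=
      ((hd2 σ).hasDerivAt).mul (hF σ)
    have h := (Complex.imCLM.hasFDerivAt.comp_hasDerivAt σ hmul)
    simpa [Complex.mul_conj, hgdef, Function.comp_def] using h
  have hq : ∀ σ : ℝ, HasDerivAt (fun σ : ℝ => (σ - s) ^ 2) (2 * (σ - s)) σ := by
    intro σ
    simpa using ((hasDerivAt_id σ).sub_const s).fun_pow 2
  -- the key real limit via L'Hôpital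
  have hL : Tendsto (fun σ => g σ / (σ - s) ^ 2) (𝓝[≠] s) (𝓝 ((b * (starRingEnd ℂ) a).im / 2)) := by
    apply HasDerivAt.lhopital_zero_nhdsNE
      (f' := fun σ => (deriv (deriv τ) σ * F σ).im) (g' := fun σ => 2 * (σ - s))
    · exact Eventually.of_forall hg
    · exact Eventually.of_forall hq
    · filter_upwards [self_mem_nhdsWithin] with σ hσ
      have : σ - s ≠ 0 := sub_ne_zero.mpr hσ
      positivity
    · have hgc : Continuous g :=
        Complex.continuous_im.comp (hd2.continuous.mul
          ((Complex.continuous_conj.comp hd1.continuous).sub continuous_const))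
      have := hgc.tendsto s
      rw [show g s = 0 by simp [hgdef, hFs]] at this
      exact this.mono_left nhdsWithin_le_nhds
    · have : Tendsto (fun σ : ℝ => (σ - s) ^ 2) (𝓝 s) (𝓝 ((s - s) ^ 2)) :=
        (((continuous_id.sub continuous_const).pow 2).tendsto s)
      simpa using this.mono_left nhdsWithin_le_nhds
    · -- f'/g' limit
      have h1 : Tendsto (fun σ => deriv (deriv τ) σ) (𝓝[≠] s) (𝓝 b) :=
        (hc2.tendsto s).mono_left nhdsWithin_le_nhds
      have h2 : Tendsto (fun σ => (deriv (deriv τ) σ * (F σ / ((σ - s : ℝ) : ℂ))).im / 2)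
          (𝓝[≠] s) (𝓝 ((b * (starRingEnd ℂ) a).im / 2)) :=
        ((Complex.continuous_im.tendsto _).comp (h1.mul hslope)).div_const 2
      refine h2.congr fun σ => ?_
      rw [← mul_div_assoc, Complex.div_ofReal_im, div_div, mul_comm (σ - s) 2]
  -- assemble
  have key : Tendsto (fun σ => ((g σ / (σ - s) ^ 2 : ℝ) : ℂ) / (F σ / ((σ - s : ℝ) : ℂ)) ^ 2)
      (𝓝[≠] s) (𝓝 ((((b * (starRingEnd ℂ) a).im / 2 : ℝ) : ℂ) / ((starRingEnd ℂ) a) ^ 2)) :=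
    (Complex.continuous_ofReal.tendsto _ |>.comp hL).div (hslope.pow 2) (pow_ne_zero 2 hca)
  have hval : ((((b * (starRingEnd ℂ) a).im / 2 : ℝ) : ℂ) / ((starRingEnd ℂ) a) ^ 2)
      = (((b * (starRingEnd ℂ) a).im : ℂ) / (2 * ((starRingEnd ℂ) a) ^ 2)) := by
    push_cast
    ring
  rw [hval] at key
  refine key.congr' ?_
  filter_upwards [self_mem_nhdsWithin] with σ hσ
  have hσ' : σ ≠ s := hσ
  have hne : ((σ - s : ℝ) : ℂ) ≠ 0 := by
    exact_mod_cast sub_ne_zero.mpr hσ'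
  show ((g σ / (σ - s) ^ 2 : ℝ) : ℂ) / (F σ / ((σ - s : ℝ) : ℂ)) ^ 2
      = ((g σ : ℝ) : ℂ) / (F σ) ^ 2
  rw [Complex.ofReal_div, Complex.ofReal_pow, Complex.ofReal_sub]
  exact M2_aux _ _ _ (by exact_mod_cast hne)
end
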